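/- Let A be the adjacency matrix of a simple undirected graph G on n vertices, let r = 2, and let m ∈ ℕ^k (with k ≥ 4, m_i ≥ 1, Σ_{i=1}^k m_i = n) have the alternating form m = (m_1, m_2, m_3, m_2, m_3, …, m_k)ᵀ, i.e., the interior block sizes alternate between the two values m_2 and m_3. If every partition matrix X ∈ P_m satisfies ⟨A, X B_{2,k} Xᵀ⟩ > 0, then bdw(A) > m_2 + m_3. -/
import Mathlib


open Matrix Finset

attribute [local instance] Classical.propDecidable

noncomputable section

/-- Trace inner product `⟨A,B⟩ = trace(Aᵀ B)`. -/
def traceInner {n : ℕ} (A B : Matrix (Fin n) (Fin n) ℝ) : ℝ :=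
  Matrix.trace (Aᵀ * B)

/-- `A` is the adjacency matrix of a simple undirected graph:
symmetric 0–1 matrix with zero diagonal. -/
def IsAdjacency {n : ℕ} (A : Matrix (Fin n) (Fin n) ℝ) : Prop :=
  (∀ i j, A i j = 0 ∨ A i j = 1) ∧ (∀ i j, A i j = A j i) ∧ ∀ i, A i i = 0

/-- Bandwidth of the graph with adjacency matrix `A` under the labeling `φ`. -/
def bdwLabel {n : ℕ} (A : Matrix (Fin n) (Fin n) ℝ) (φ : Equiv.Perm (Fin n)) : ℕ :=
  Finset.sup Finset.univ fun p : Fin n × Fin n =>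
    if A p.1 p.2 ≠ 0 then (((φ p.1 : ℕ) : ℤ) - ((φ p.2 : ℕ) : ℤ)).natAbs else 0

/-- Bandwidth of the graph with adjacency matrix `A`:
minimum over all labelings. -/
def bdw {n : ℕ} (A : Matrix (Fin n) (Fin n) ℝ) : ℕ :=
  ⨅ φ : Equiv.Perm (Fin n), bdwLabel A φ

/-- `n × k` partition matrices for block sizes `m 0, …, m (k-1)`. -/
def IsPartitionMatrix (n k : ℕ) (m : ℕ → ℕ) (X : Matrix (Fin n) (Fin k) ℝ) : Prop :=
  (∀ i j, X i j = 0 ∨ X i j = 1) ∧ (∀ i, ∑ j, X i j = 1) ∧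
  ∀ j : Fin k, ∑ i, X i j = (m (j : ℕ) : ℝ)

/-- The matrix `B_{r,k}`, with `(B_{r,k})_{uv} = 1` iff `|u - v| > r`. -/
def Bmat (k r : ℕ) : Matrix (Fin k) (Fin k) ℝ :=
  Matrix.of fun u v : Fin k =>
    if (r : ℤ) < |((u : ℕ) : ℤ) - ((v : ℕ) : ℤ)| then 1 else 0

/-- The basic partition matrix `X̄`: the first `m 0` vertices in block `0`,
the next `m 1` vertices in block `1`, and so on. -/
def basicPartition (n k : ℕ) (m : ℕ → ℕ) : Matrix (Fin n) (Fin k) ℝ :=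
  Matrix.of fun (i : Fin n) (j : Fin k) =>
    if (∑ l ∈ Finset.range (j : ℕ), m l) ≤ (i : ℕ) ∧
        (i : ℕ) < ∑ l ∈ Finset.range ((j : ℕ) + 1), m l then 1 else 0

/-- Permutation matrix of a permutation `σ`. -/
def permMatrix {n : ℕ} (σ : Equiv.Perm (Fin n)) : Matrix (Fin n) (Fin n) ℝ :=
  Matrix.of fun i j => if σ i = j then 1 else 0

/-- Corollary 2 of the paper: `r = 2`, interior block sizes
alternate between the two values `m_2` and `m_3` (0-indexed: `m 1` and `m 2`);
if every partition matrix `X ∈ P_m` satisfies `⟨A, X B_{2,k} Xᵀ⟩ > 0`,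
then `bdw(A) > m_2 + m_3`. -/
theorem bandwidth_gt_of_alternating_blocks
    (n k : ℕ) (m : ℕ → ℕ) (A : Matrix (Fin n) (Fin n) ℝ)
    (hA : IsAdjacency A) (hk4 : 4 ≤ k) (hkn : k ≤ n)
    (hm : ∀ i < k, 1 ≤ m i) (hsum : ∑ i ∈ Finset.range k, m i = n)
    (halt : ∀ i, 1 ≤ i → i ≤ k - 2 → m i = if i % 2 = 1 then m 1 else m 2)
    (hpos : ∀ X : Matrix (Fin n) (Fin k) ℝ, IsPartitionMatrix n k m X →
      0 < traceInner A (X * Bmat k 2 * Xᵀ)) :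
    m 1 + m 2 < bdw A := by
  by_contra hcon
  push_neg at hcon
  -- obtain a minimizing labeling
  have hne : (Set.range (bdwLabel A)).Nonempty := Set.range_nonempty _
  have hmem : bdw A ∈ Set.range (bdwLabel A) := Nat.sInf_mem hne
  obtain ⟨φ, hφ⟩ := hmem
  have hφle : bdwLabel A φ ≤ m 1 + m 2 := by rw [hφ]; exact hcon
  set S : ℕ → ℕ := fun j => ∑ l ∈ Finset.range j, m l with hSdef
  have hSmono : Monotone S := fun a b hab =>
    Finset.sum_le_sum_of_subset (Finset.range_subset_range.mpr hab)
  have hSk : S k = n := hsum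
  have hSsucc : ∀ j, S (j+1) = S j + m j := fun j => Finset.sum_range_succ m j
  -- one-sided key step
  have hstep : ∀ u v : ℕ, v < k → u + 3 ≤ v → ∀ a b : ℕ,
      a < S (u+1) → S v ≤ b → b ≤ a + (m 1 + m 2) → False := by
    intro u v hvk huv a b ha hb hba
    have h1 : S (u+3) ≤ S v := hSmono huv
    have h2 : S (u+3) = S (u+1) + m (u+1) + m (u+2) := by
      rw [show u+3 = (u+2)+1 from rfl, hSsucc, show u+2 = (u+1)+1 from rfl, hSsucc]
    have hm1 : m (u+1) = if (u+1) % 2 = 1 then m 1 else m 2 :=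
      halt (u+1) (by omega) (by omega)
    have hm2 : m (u+2) = if (u+2) % 2 = 1 then m 1 else m 2 :=
      halt (u+2) (by omega) (by omega)
    have hsum12 : m (u+1) + m (u+2) = m 1 + m 2 := by
      rw [hm1, hm2]
      rcases Nat.mod_two_eq_zero_or_one (u+1) with h | h
      · rw [if_neg (by omega), if_pos (by omega), Nat.add_comm]
      · rw [if_pos h, if_neg (by omega)]
    omega
  -- key lemma: blocks of endpoints of an edge are close
  have hkey : ∀ (u v : Fin k) (a b : ℕ), S (u:ℕ) ≤ a → a < S ((u:ℕ)+1) →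
      S (v:ℕ) ≤ b → b < S ((v:ℕ)+1) → ((a:ℤ) - (b:ℤ)).natAbs ≤ m 1 + m 2 →
      ¬ ((2:ℤ) < |((u:ℕ):ℤ) - ((v:ℕ):ℤ)|) := by
    intro u v a b hua hua' hvb hvb' hab hlt
    rw [Int.abs_eq_natAbs] at hlt
    have hd : b ≤ a + (m 1 + m 2) ∧ a ≤ b + (m 1 + m 2) := by omega
    have hcase : (u:ℕ) + 3 ≤ (v:ℕ) ∨ (v:ℕ) + 3 ≤ (u:ℕ) := by omega
    rcases hcase with h | h
    · exact hstep (u:ℕ) (v:ℕ) v.2 h a b hua' hvb hd.1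
    · exact hstep (v:ℕ) (u:ℕ) u.2 h b a hvb' hua hd.2
  -- block existence
  have hblk : ∀ x : Fin n, ∃ j : Fin k, S (j:ℕ) ≤ (φ x : ℕ) ∧ (φ x : ℕ) < S ((j:ℕ)+1) := by
    intro x
    have hx : (φ x : ℕ) < n := (φ x).2
    set P : ℕ → Prop := fun j => S j ≤ (φ x : ℕ) with hP
    have hP0 : P 0 := by simp [P, S]
    have hPk : ¬ P k := by simp only [P, hSk]; omega
    set j := Nat.findGreatest P k with hj
    have hjk : j ≤ k := Nat.findGreatest_le k
    have hspec : P j := Nat.findGreatest_spec (Nat.zero_le k) hP0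
    have hjlt : j < k := lt_of_le_of_ne hjk (by intro h; exact hPk (h ▸ hspec))
    have hnot : ¬ P (j+1) := Nat.findGreatest_is_greatest (Nat.lt_succ_self j) hjlt
    exact ⟨⟨j, hjlt⟩, hspec, by simpa [P] using Nat.lt_of_not_le hnot⟩
  -- uniqueness of the block
  have huniq : ∀ (x : ℕ) (j j' : ℕ), S j ≤ x → x < S (j+1) → S j' ≤ x → x < S (j'+1) → j = j' := by
    intro x j j' h1 h2 h3 h4
    by_contra hne'
    rcases Nat.lt_or_ge j j' with h | h
    · have := hSmono (show j+1 ≤ j' from h)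
      omega
    · have hlt : j' < j := by omega
      have := hSmono (show j'+1 ≤ j from by omega)
      omega
  -- the partition matrix induced by φ
  set X : Matrix (Fin n) (Fin k) ℝ := Matrix.of fun (i : Fin n) (j : Fin k) =>
    if S (j:ℕ) ≤ (φ i : ℕ) ∧ (φ i : ℕ) < S ((j:ℕ)+1) then 1 else 0 with hXdef
  have hXcond : ∀ (i : Fin n) (j : Fin k), X i j ≠ 0 →
      S (j:ℕ) ≤ (φ i : ℕ) ∧ (φ i : ℕ) < S ((j:ℕ)+1) := by
    intro i j h
    by_contra hc
    exact h (by simp [hXdef, hc])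
  have hXpart : IsPartitionMatrix n k m X := by
    refine ⟨?_, ?_, ?_⟩
    · intro i j
      by_cases h : S (j:ℕ) ≤ (φ i : ℕ) ∧ (φ i : ℕ) < S ((j:ℕ)+1)
      · right; simp [hXdef, h]
      · left; simp [hXdef, h]
    · intro i
      obtain ⟨j₀, h1, h2⟩ := hblk i
      rw [Finset.sum_eq_single j₀]
      · simp [hXdef, h1, h2]
      · intro b _ hb
        simp only [hXdef, Matrix.of_apply, ite_eq_right_iff, one_ne_zero]
        rintro ⟨hb1, hb2⟩
        exact absurd (Fin.ext (huniq (φ i : ℕ) _ _ hb1 hb2 h1 h2)) hb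
      · intro h; exact absurd (Finset.mem_univ j₀) h
    · intro j
      have heq : ∀ i : Fin n, X i j =
          (fun y : Fin n => if S (j:ℕ) ≤ (y:ℕ) ∧ (y:ℕ) < S ((j:ℕ)+1) then (1:ℝ) else 0) (φ i) :=
        fun i => rfl
      rw [Fintype.sum_congr _ _ heq]
      rw [Fintype.sum_equiv φ
        (fun i => (fun y : Fin n => if S (j:ℕ) ≤ (y:ℕ) ∧ (y:ℕ) < S ((j:ℕ)+1) then (1:ℝ) else 0) (φ i))
        (fun y : Fin n => if S (j:ℕ) ≤ (y:ℕ) ∧ (y:ℕ) < S ((j:ℕ)+1) then (1:ℝ) else 0)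
        (fun i => rfl)]
      have hjk : (j:ℕ) + 1 ≤ k := j.2
      have hSle : S ((j:ℕ)+1) ≤ n := hSk ▸ hSmono hjk
      rw [Fin.sum_univ_eq_sum_range (fun x => if S (j:ℕ) ≤ x ∧ x < S ((j:ℕ)+1) then (1:ℝ) else 0) n]
      rw [← Finset.sum_subset (show Finset.Ico (S (j:ℕ)) (S ((j:ℕ)+1)) ⊆ Finset.range n by
          intro x hx
          rw [Finset.mem_Ico] at hx
          rw [Finset.mem_range]
          omega)
        (by
          intro x hx hnx
          rw [Finset.mem_Ico] at hnx
          rw [if_neg (by omega)])]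
      have hone : ∀ x ∈ Finset.Ico (S (j:ℕ)) (S ((j:ℕ)+1)),
          (if S (j:ℕ) ≤ x ∧ x < S ((j:ℕ)+1) then (1:ℝ) else 0) = 1 := by
        intro x hx
        rw [Finset.mem_Ico] at hx
        rw [if_pos hx]
      rw [Finset.sum_congr rfl hone, Finset.sum_const, Nat.card_Ico, hSsucc]
      simp
  -- the trace vanishes
  have htr : traceInner A (X * Bmat k 2 * Xᵀ) = 0 := by
    have hterm : ∀ i j : Fin n, A j i * (X * Bmat k 2 * Xᵀ) j i = 0 := by
      intro i j
      rcases eq_or_ne (A j i) 0 with h | h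
      · rw [h, zero_mul]
      · have h1 : (if A j i ≠ 0 then (((φ j : ℕ):ℤ) - ((φ i : ℕ):ℤ)).natAbs else 0) ≤ bdwLabel A φ :=
          Finset.le_sup (f := fun p : Fin n × Fin n =>
            if A p.1 p.2 ≠ 0 then (((φ p.1 : ℕ):ℤ) - ((φ p.2 : ℕ):ℤ)).natAbs else 0)
            (Finset.mem_univ ((j, i) : Fin n × Fin n))
        rw [if_pos h] at h1
        have hedge : (((φ j : ℕ):ℤ) - ((φ i : ℕ):ℤ)).natAbs ≤ m 1 + m 2 := h1.trans hφle
        have hM : (X * Bmat k 2 * Xᵀ) j i = 0 := by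
          rw [Matrix.mul_apply]
          refine Finset.sum_eq_zero fun v _ => ?_
          rw [Matrix.transpose_apply]
          rcases eq_or_ne (X i v) 0 with hXi | hXi
          · rw [hXi, mul_zero]
          · have hvc := hXcond i v hXi
            rw [Matrix.mul_apply]
            rw [Finset.sum_eq_zero fun u _ => ?_, zero_mul]
            rcases eq_or_ne (X j u) 0 with hXj | hXj
            · rw [hXj, zero_mul]
            · have huc := hXcond j u hXj
              have hB : Bmat k 2 u v = 0 := by
                have hnc := hkey u v (φ j : ℕ) (φ i : ℕ) huc.1 huc.2 hvc.1 hvc.2 hedge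
                simp only [Bmat, Matrix.of_apply]
                rw [if_neg (by push_cast; exact hnc)]
              rw [hB, mul_zero]
        rw [hM, mul_zero]
    unfold traceInner
    rw [Matrix.trace]
    refine Finset.sum_eq_zero fun i _ => ?_
    rw [Matrix.diag_apply, Matrix.mul_apply]
    refine Finset.sum_eq_zero fun j _ => ?_
    rw [Matrix.transpose_apply]
    exact hterm i j
  have hfin := hpos X hXpart
  rw [htr] at hfin
  exact lt_irrefl 0 hfin

end
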